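/- With U, Σ, C, U_Σ, H and L₂^Σ as in the context, ‖·‖_{L₂^Σ} is a norm on L₂^Σ and (L₂^Σ, ‖·‖_{L₂^Σ}) is a Banach space, i.e. it is complete. -/

import Mathlib

open Filter
open scoped InnerProductSpace ENNReal NNReal Topology

noncomputable section

variable {U : Type*} [NormedAddCommGroup U] [InnerProductSpace ℝ U] [CompleteSpace U]
variable {H : Type*} [NormedAddCommGroup H] [InnerProductSpace ℝ H] [CompleteSpace H]

/-- The norm of `u` in the range of `S` (i.e. of `Q^{1/2}(U)` when `S = Q^{1/2}`):
`‖u‖ = inf { ‖v‖ : S v = u }`. -/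
def rangeNorm (S : U →L[ℝ] U) (u : U) : ℝ :=
  sInf {r : ℝ | ∃ v : U, S v = u ∧ r = ‖v‖}

/-- Membership in `U_Σ`: `u` admits a representation `u = ∑ᵢ uᵢ` (convergent in `U`) with
`uᵢ ∈ Qᵢ^{1/2}(U)`, `Qᵢ ∈ Σ`, and `∑ᵢ ‖uᵢ‖_{Qᵢ^{1/2}(U)} < ∞`.  Here `R Q` denotes the
positive square root `Q^{1/2}`. -/
def MemUSigma (Sig : Set (U →L[ℝ] U)) (R : (U →L[ℝ] U) → U →L[ℝ] U) (u : U) : Prop :=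
  ∃ (Q : ℕ → U →L[ℝ] U) (v : ℕ → U),
    (∀ i, Q i ∈ Sig) ∧ (∀ i, v i ∈ Set.range (R (Q i))) ∧
    HasSum v u ∧ Summable (fun i => rangeNorm (R (Q i)) (v i))

/-- The norm on `U_Σ`: the infimum of `∑ᵢ ‖uᵢ‖_{Qᵢ^{1/2}(U)}` over all representations. -/
def normUSigma (Sig : Set (U →L[ℝ] U)) (R : (U →L[ℝ] U) → U →L[ℝ] U) (u : U) : ℝ :=
  sInf {r : ℝ | ∃ (Q : ℕ → U →L[ℝ] U) (v : ℕ → U),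
    (∀ i, Q i ∈ Sig) ∧ (∀ i, v i ∈ Set.range (R (Q i))) ∧
    HasSum v u ∧ Summable (fun i => rangeNorm (R (Q i)) (v i)) ∧
    r = ∑' i, rangeNorm (R (Q i)) (v i)}

/-- The square of the `L₂^Σ`-norm of a linear map `Φ` (considered on `U_Σ`):
`‖Φ‖²_{L₂^Σ} = sup_{Q∈Σ} ‖Φ ∘ Q^{1/2}‖²_{L₂(U,H)}`, the Hilbert–Schmidt norm being
computed via the orthonormal basis `bU`; valued in `ℝ≥0∞`. -/
def l2SigmaNormSq (bU : HilbertBasis ℕ ℝ U) (Sig : Set (U →L[ℝ] U))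
    (R : (U →L[ℝ] U) → U →L[ℝ] U) (Φ : U →ₗ[ℝ] H) : ℝ≥0∞ :=
  ⨆ Q ∈ Sig, ∑' i : ℕ, (‖Φ (R Q (bU i))‖₊ : ℝ≥0∞) ^ 2

/-- The `L₂^Σ`-norm, as a real number. -/
def l2SigmaNorm (bU : HilbertBasis ℕ ℝ U) (Sig : Set (U →L[ℝ] U))
    (R : (U →L[ℝ] U) → U →L[ℝ] U) (Φ : U →ₗ[ℝ] H) : ℝ :=
  Real.sqrt (l2SigmaNormSq bU Sig R Φ).toReal

/-- Membership in `L₂^Σ`: `Φ` is a bounded operator `(U_Σ, ‖·‖_{U_Σ}) → H` with finite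
`L₂^Σ`-norm. -/
def MemL2Sigma (bU : HilbertBasis ℕ ℝ U) (Sig : Set (U →L[ℝ] U))
    (R : (U →L[ℝ] U) → U →L[ℝ] U) (Φ : U →ₗ[ℝ] H) : Prop :=
  (∃ K : ℝ, ∀ u : U, MemUSigma Sig R u → ‖Φ u‖ ≤ K * normUSigma Sig R u) ∧
    l2SigmaNormSq bU Sig R Φ ≠ ∞

section AuxL2Sigma

variable (Sig : Set (U →L[ℝ] U)) (R : (U →L[ℝ] U) → U →L[ℝ] U)

lemma rangeNorm_nonneg (S : U →L[ℝ] U) (u : U) : 0 ≤ rangeNorm S u := by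
  apply Real.sInf_nonneg
  rintro r ⟨v, -, rfl⟩
  exact norm_nonneg v

lemma rangeNorm_le {S : U →L[ℝ] U} {u v : U} (h : S v = u) : rangeNorm S u ≤ ‖v‖ := by
  apply csInf_le
  · exact ⟨0, by rintro r ⟨w, -, rfl⟩; exact norm_nonneg w⟩
  · exact ⟨v, h, rfl⟩

lemma rangeNorm_zero (S : U →L[ℝ] U) : rangeNorm S 0 = 0 :=
  le_antisymm (by simpa using rangeNorm_le (map_zero S)) (rangeNorm_nonneg S 0)

lemma rangeNorm_smul_le (S : U →L[ℝ] U) (c : ℝ) {u : U} (hu : u ∈ Set.range S) :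
    rangeNorm S (c • u) ≤ |c| * rangeNorm S u := by
  rcases eq_or_ne c 0 with rfl | hc
  · simp [rangeNorm_zero]
  have hc' : 0 < |c| := abs_pos.2 hc
  have h2 : rangeNorm S (c • u) / |c| ≤ rangeNorm S u := by
    apply le_csInf
    · obtain ⟨w, hw⟩ := hu
      exact ⟨‖w‖, w, hw, rfl⟩
    · rintro r ⟨v, hv, rfl⟩
      rw [div_le_iff₀ hc']
      have h3 : rangeNorm S (c • u) ≤ ‖c • v‖ := rangeNorm_le (by rw [map_smul, hv])
      simpa [norm_smul, mul_comm] using h3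
  calc rangeNorm S (c • u) = rangeNorm S (c • u) / |c| * |c| := (div_mul_cancel₀ _ hc'.ne').symm
    _ ≤ rangeNorm S u * |c| := mul_le_mul_of_nonneg_right h2 hc'.le
    _ = |c| * rangeNorm S u := mul_comm _ _

lemma hasSum_interleave {M : Type*} [AddCommMonoid M] [TopologicalSpace M] [ContinuousAdd M]
    {f g : ℕ → M} {a b : M} (hf : HasSum f a) (hg : HasSum g b) :
    HasSum (fun i => if Even i then f (i / 2) else g (i / 2)) (a + b) := by
  classical
  have h1 : HasSum (fun i : ℕ => if Even i then f (i / 2) else 0) a := by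
    have hinj : Function.Injective fun k : ℕ => 2 * k := fun x y h => by
      have h' : 2 * x = 2 * y := h
      omega
    have hsupp : ∀ x, x ∉ Set.range (fun k : ℕ => 2 * k) →
        (if Even x then f (x / 2) else 0) = 0 := by
      intro x hx
      rw [if_neg]
      rintro ⟨k, hk⟩
      exact hx ⟨k, show 2 * k = x by omega⟩
    rw [← hinj.hasSum_iff hsupp]
    convert hf using 1
    funext k
    simp only [Function.comp_apply]
    have hek : Even (2 * k) := even_two_mul k
    simp only [hek, if_true]
    congr 1
    omega
  have h2 : HasSum (fun i : ℕ => if Even i then 0 else g (i / 2)) b := by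
    have hinj : Function.Injective fun k : ℕ => 2 * k + 1 := fun x y h => by
      have h' : 2 * x + 1 = 2 * y + 1 := h
      omega
    have hsupp : ∀ x, x ∉ Set.range (fun k : ℕ => 2 * k + 1) →
        (if Even x then 0 else g (x / 2)) = 0 := by
      intro x hx
      rcases Nat.even_or_odd x with h | h
      · rw [if_pos h]
      · obtain ⟨k, hk⟩ := h
        exact absurd ⟨k, show 2 * k + 1 = x by omega⟩ hx
    rw [← hinj.hasSum_iff hsupp]
    convert hg using 1
    funext k
    simp only [Function.comp_apply]
    have hok : ¬ Even (2 * k + 1) := by rw [Nat.even_iff]; omega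
    simp only [hok, if_false]
    congr 1
    omega
  have h3 := h1.add h2
  convert h3 using 1
  funext i
  by_cases h : Even i <;> simp [h]

lemma memUSigma_single {Q : U →L[ℝ] U} (hQ : Q ∈ Sig) (w : U) :
    MemUSigma Sig R (R Q w) := by
  classical
  refine ⟨fun _ => Q, fun i => if i = 0 then R Q w else 0, fun _ => hQ, ?_,
    hasSum_ite_eq 0 (R Q w), ?_⟩
  · intro i
    by_cases h : i = 0
    · exact ⟨w, by simp [h]⟩
    · exact ⟨0, by simp [h]⟩
  · have h : (fun i => rangeNorm (R Q) (if i = 0 then R Q w else 0))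
        = fun i : ℕ => if i = 0 then rangeNorm (R Q) (R Q w) else 0 := by
      funext i
      by_cases h : i = 0 <;> simp [h, rangeNorm_zero]
    rw [h]
    exact (hasSum_ite_eq 0 _).summable

lemma memUSigma_zero (hne : Sig.Nonempty) : MemUSigma Sig R 0 := by
  obtain ⟨Q, hQ⟩ := hne
  have h := memUSigma_single Sig R hQ 0
  rwa [map_zero] at h

lemma memUSigma_add {u₁ u₂ : U} (h₁ : MemUSigma Sig R u₁) (h₂ : MemUSigma Sig R u₂) :
    MemUSigma Sig R (u₁ + u₂) := by
  classical
  obtain ⟨Q₁, v₁, hQ₁, hv₁, hsum₁, hs₁⟩ := h₁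
  obtain ⟨Q₂, v₂, hQ₂, hv₂, hsum₂, hs₂⟩ := h₂
  refine ⟨fun i => if Even i then Q₁ (i / 2) else Q₂ (i / 2),
      fun i => if Even i then v₁ (i / 2) else v₂ (i / 2), ?_, ?_,
      hasSum_interleave hsum₁ hsum₂, ?_⟩
  · intro i
    by_cases h : Even i
    · simp only [if_pos h]; exact hQ₁ _
    · simp only [if_neg h]; exact hQ₂ _
  · intro i
    by_cases h : Even i
    · simp only [if_pos h]; exact hv₁ _
    · simp only [if_neg h]; exact hv₂ _
  · have h : (fun i => rangeNorm (R (if Even i then Q₁ (i / 2) else Q₂ (i / 2)))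
        (if Even i then v₁ (i / 2) else v₂ (i / 2)))
        = fun i : ℕ => if Even i then rangeNorm (R (Q₁ (i / 2))) (v₁ (i / 2))
            else rangeNorm (R (Q₂ (i / 2))) (v₂ (i / 2)) := by
      funext i
      by_cases h : Even i <;> simp [h]
    rw [h]
    exact (hasSum_interleave hs₁.hasSum hs₂.hasSum).summable

lemma memUSigma_smul (c : ℝ) {u : U} (hu : MemUSigma Sig R u) : MemUSigma Sig R (c • u) := by
  obtain ⟨Q, v, hQ, hv, hsum, hs⟩ := hu
  refine ⟨Q, fun i => c • v i, hQ, ?_, hsum.const_smul c, ?_⟩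
  · intro i
    obtain ⟨w, hw⟩ := hv i
    exact ⟨c • w, by rw [map_smul, hw]⟩
  · exact Summable.of_nonneg_of_le (fun i => rangeNorm_nonneg _ _)
      (fun i => rangeNorm_smul_le _ c (hv i)) (hs.mul_left |c|)

lemma normUSigma_nonneg (u : U) : 0 ≤ normUSigma Sig R u := by
  apply Real.sInf_nonneg
  rintro r ⟨Q, v, -, -, -, -, rfl⟩
  exact tsum_nonneg fun i => rangeNorm_nonneg _ _

lemma normUSigma_le_of_rep {u : U} {Q : ℕ → U →L[ℝ] U} {v : ℕ → U}
    (hQ : ∀ i, Q i ∈ Sig) (hv : ∀ i, v i ∈ Set.range (R (Q i)))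
    (hsum : HasSum v u) (hs : Summable fun i => rangeNorm (R (Q i)) (v i)) :
    normUSigma Sig R u ≤ ∑' i, rangeNorm (R (Q i)) (v i) := by
  apply csInf_le
  · refine ⟨0, ?_⟩
    rintro r ⟨Q', v', -, -, -, -, rfl⟩
    exact tsum_nonneg fun i => rangeNorm_nonneg _ _
  · exact ⟨Q, v, hQ, hv, hsum, hs, rfl⟩

lemma normUSigma_single_le {Q : U →L[ℝ] U} (hQ : Q ∈ Sig) (w : U) :
    normUSigma Sig R (R Q w) ≤ ‖w‖ := by
  classical
  have h0 : (fun i => rangeNorm (R Q) (if i = 0 then R Q w else 0))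
      = fun i : ℕ => if i = 0 then rangeNorm (R Q) (R Q w) else 0 := by
    funext i
    by_cases h : i = 0 <;> simp [h, rangeNorm_zero]
  have h1 : normUSigma Sig R (R Q w)
      ≤ ∑' i : ℕ, rangeNorm (R ((fun _ => Q) i)) ((fun i : ℕ => if i = 0 then R Q w else 0) i) := by
    refine normUSigma_le_of_rep Sig R (fun _ => hQ) ?_ (hasSum_ite_eq 0 (R Q w)) ?_
    · intro i
      by_cases h : i = 0
      · exact ⟨w, by simp [h]⟩
      · exact ⟨0, by simp [h]⟩
    · rw [h0]
      exact (hasSum_ite_eq 0 _).summable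
  rw [h0] at h1
  rw [tsum_ite_eq] at h1
  exact h1.trans (rangeNorm_le rfl)

lemma l2SigmaNormSq_le (bU : HilbertBasis ℕ ℝ U) (Φ : U →ₗ[ℝ] H) {c : ℝ≥0∞}
    (h : ∀ Q ∈ Sig, (∑' i : ℕ, (‖Φ (R Q (bU i))‖₊ : ℝ≥0∞) ^ 2) ≤ c) :
    l2SigmaNormSq bU Sig R Φ ≤ c := iSup₂_le h

lemma tsum_le_l2SigmaNormSq (bU : HilbertBasis ℕ ℝ U) (Φ : U →ₗ[ℝ] H) {Q : U →L[ℝ] U}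
    (hQ : Q ∈ Sig) :
    ∑' i : ℕ, (‖Φ (R Q (bU i))‖₊ : ℝ≥0∞) ^ 2 ≤ l2SigmaNormSq bU Sig R Φ :=
  le_iSup₂ (f := fun Q (_ : Q ∈ Sig) => ∑' i : ℕ, (‖Φ (R Q (bU i))‖₊ : ℝ≥0∞) ^ 2) Q hQ

lemma ennreal_l2_add (f g : ℕ → H) :
    (∑' i, ((‖f i + g i‖₊ : ℝ≥0∞)) ^ 2) ^ (1 / 2 : ℝ)
      ≤ (∑' i, ((‖f i‖₊ : ℝ≥0∞)) ^ 2) ^ (1 / 2 : ℝ)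
        + (∑' i, ((‖g i‖₊ : ℝ≥0∞)) ^ 2) ^ (1 / 2 : ℝ) := by
  have hpow : ∀ x : ℝ≥0∞, x ^ (2 : ℝ) = x ^ (2 : ℕ) := fun x => by
    rw [← ENNReal.rpow_natCast x 2]
    norm_num
  have key := ENNReal.lintegral_Lp_add_le
    (μ := (MeasureTheory.Measure.count : MeasureTheory.Measure ℕ)) (p := (2 : ℝ))
    (f := fun i => (‖f i‖₊ : ℝ≥0∞)) (g := fun i => (‖g i‖₊ : ℝ≥0∞))
    measurable_from_nat.aemeasurable measurable_from_nat.aemeasurable one_le_two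
  simp only [MeasureTheory.lintegral_count, Pi.add_apply, hpow] at key
  calc (∑' i, ((‖f i + g i‖₊ : ℝ≥0∞)) ^ 2) ^ (1 / 2 : ℝ)
      ≤ (∑' i, ((‖f i‖₊ : ℝ≥0∞) + (‖g i‖₊ : ℝ≥0∞)) ^ 2) ^ (1 / 2 : ℝ) := by
        refine ENNReal.rpow_le_rpow ?_ (by norm_num)
        refine ENNReal.tsum_le_tsum fun i => ?_
        refine pow_le_pow_left' ?_ 2
        exact_mod_cast nnnorm_add_le (f i) (g i)
    _ ≤ _ := key

lemma ennreal_sq_rpow_half (x : ℝ≥0∞) : (x ^ (1 / 2 : ℝ)) ^ (2 : ℕ) = x := by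
  rw [← ENNReal.rpow_natCast (x ^ (1 / 2 : ℝ)) 2, ← ENNReal.rpow_mul]
  norm_num

lemma l2SigmaNormSq_add_le (bU : HilbertBasis ℕ ℝ U) (Φ Ψ : U →ₗ[ℝ] H) :
    l2SigmaNormSq bU Sig R (Φ + Ψ)
      ≤ (l2SigmaNormSq bU Sig R Φ ^ (1 / 2 : ℝ) + l2SigmaNormSq bU Sig R Ψ ^ (1 / 2 : ℝ)) ^ 2 := by
  refine l2SigmaNormSq_le Sig R bU _ fun Q hQ => ?_
  have h1 : (∑' i, ((‖(Φ + Ψ) (R Q (bU i))‖₊ : ℝ≥0∞)) ^ 2) ^ (1 / 2 : ℝ)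
      ≤ l2SigmaNormSq bU Sig R Φ ^ (1 / 2 : ℝ) + l2SigmaNormSq bU Sig R Ψ ^ (1 / 2 : ℝ) := by
    have h2 := ennreal_l2_add (fun i => Φ (R Q (bU i))) (fun i => Ψ (R Q (bU i)))
    simp only [LinearMap.add_apply]
    refine le_trans h2 (add_le_add ?_ ?_)
    · exact ENNReal.rpow_le_rpow (tsum_le_l2SigmaNormSq Sig R bU Φ hQ) (by norm_num)
    · exact ENNReal.rpow_le_rpow (tsum_le_l2SigmaNormSq Sig R bU Ψ hQ) (by norm_num)
  calc (∑' i : ℕ, ((‖(Φ + Ψ) (R Q (bU i))‖₊ : ℝ≥0∞)) ^ 2)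
      = (((∑' i : ℕ, ((‖(Φ + Ψ) (R Q (bU i))‖₊ : ℝ≥0∞)) ^ 2) ^ (1 / 2 : ℝ))) ^ (2 : ℕ) :=
        (ennreal_sq_rpow_half _).symm
    _ ≤ (l2SigmaNormSq bU Sig R Φ ^ (1 / 2 : ℝ) + l2SigmaNormSq bU Sig R Ψ ^ (1 / 2 : ℝ)) ^ 2 :=
        pow_le_pow_left' h1 2

lemma l2SigmaNormSq_smul (bU : HilbertBasis ℕ ℝ U) (c : ℝ) (Φ : U →ₗ[ℝ] H) :
    l2SigmaNormSq bU Sig R (c • Φ) = ((‖c‖₊ : ℝ≥0∞)) ^ 2 * l2SigmaNormSq bU Sig R Φ := by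
  unfold l2SigmaNormSq
  simp_rw [LinearMap.smul_apply, nnnorm_smul, ENNReal.coe_mul, mul_pow, ENNReal.tsum_mul_left,
    ENNReal.mul_iSup]

lemma tsum_le_liminf_tsum {f : ℕ → ℝ≥0∞} {g : ℕ → ℕ → ℝ≥0∞}
    (h : ∀ i, Filter.Tendsto (fun m => g m i) Filter.atTop (𝓝 (f i))) :
    ∑' i, f i ≤ Filter.liminf (fun m => ∑' i, g m i) Filter.atTop := by
  have h1 : ∀ i, f i = Filter.liminf (fun m => g m i) Filter.atTop := fun i =>
    ((h i).liminf_eq).symm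
  calc ∑' i, f i = ∑' i, Filter.liminf (fun m => g m i) Filter.atTop := tsum_congr h1
    _ = ∫⁻ i, Filter.liminf (fun m => g m i) Filter.atTop ∂(MeasureTheory.Measure.count) :=
        (MeasureTheory.lintegral_count _).symm
    _ ≤ Filter.liminf (fun m => ∫⁻ i, g m i ∂(MeasureTheory.Measure.count)) Filter.atTop :=
        MeasureTheory.lintegral_liminf_le fun _ => measurable_from_nat
    _ = Filter.liminf (fun m => ∑' i, g m i) Filter.atTop := by
        simp_rw [MeasureTheory.lintegral_count]

lemma normSq_le_of_norm_le (bU : HilbertBasis ℕ ℝ U) {Φ : U →ₗ[ℝ] H}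
    (hfin : l2SigmaNormSq bU Sig R Φ ≠ ∞) {ε : ℝ} (h : l2SigmaNorm bU Sig R Φ ≤ ε) :
    l2SigmaNormSq bU Sig R Φ ≤ ENNReal.ofReal (ε ^ 2) := by
  have h2 : Real.sqrt (l2SigmaNormSq bU Sig R Φ).toReal ≤ ε := h
  have h1 : (l2SigmaNormSq bU Sig R Φ).toReal ≤ ε ^ 2 := by
    nlinarith [Real.sq_sqrt (ENNReal.toReal_nonneg (a := l2SigmaNormSq bU Sig R Φ)),
      Real.sqrt_nonneg (l2SigmaNormSq bU Sig R Φ).toReal]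
  calc l2SigmaNormSq bU Sig R Φ = ENNReal.ofReal (l2SigmaNormSq bU Sig R Φ).toReal :=
      (ENNReal.ofReal_toReal hfin).symm
    _ ≤ ENNReal.ofReal (ε ^ 2) := ENNReal.ofReal_le_ofReal h1

lemma norm_le_of_normSq_le (bU : HilbertBasis ℕ ℝ U) {Φ : U →ₗ[ℝ] H} {ε : ℝ} (hε : 0 ≤ ε)
    (h : l2SigmaNormSq bU Sig R Φ ≤ ENNReal.ofReal (ε ^ 2)) :
    l2SigmaNorm bU Sig R Φ ≤ ε := by
  have h1 : (l2SigmaNormSq bU Sig R Φ).toReal ≤ ε ^ 2 := by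
    have h2 := ENNReal.toReal_mono ENNReal.ofReal_ne_top h
    rwa [ENNReal.toReal_ofReal (by positivity)] at h2
  calc l2SigmaNorm bU Sig R Φ = Real.sqrt (l2SigmaNormSq bU Sig R Φ).toReal := rfl
    _ ≤ Real.sqrt (ε ^ 2) := Real.sqrt_le_sqrt h1
    _ = ε := Real.sqrt_sq hε

lemma norm_apply_RQ_le (bU : HilbertBasis ℕ ℝ U) {Φ : U →ₗ[ℝ] H} {K : ℝ} (hK0 : 0 ≤ K)
    (hK : ∀ u : U, MemUSigma Sig R u → ‖Φ u‖ ≤ K * normUSigma Sig R u)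
    (hfin : l2SigmaNormSq bU Sig R Φ ≠ ∞) {Q : U →L[ℝ] U} (hQ : Q ∈ Sig) (w : U) :
    ‖Φ (R Q w)‖ ≤ l2SigmaNorm bU Sig R Φ * ‖w‖ := by
  set N := l2SigmaNorm bU Sig R Φ with hN
  have hN0 : 0 ≤ N := Real.sqrt_nonneg _
  have hfs : ∀ n : ℕ, (∑ i ∈ Finset.range n, ‖Φ (R Q (bU i))‖ ^ 2) ≤ N ^ 2 := by
    intro n
    have h1 : (∑ i ∈ Finset.range n, ((‖Φ (R Q (bU i))‖₊ : ℝ≥0∞)) ^ 2)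
        ≤ l2SigmaNormSq bU Sig R Φ :=
      le_trans (ENNReal.sum_le_tsum _) (tsum_le_l2SigmaNormSq Sig R bU Φ hQ)
    have h2 := ENNReal.toReal_mono hfin h1
    rw [ENNReal.toReal_sum (fun i _ => ENNReal.pow_ne_top ENNReal.coe_ne_top)] at h2
    have h3 : N ^ 2 = (l2SigmaNormSq bU Sig R Φ).toReal := Real.sq_sqrt ENNReal.toReal_nonneg
    rw [h3]
    refine le_trans (le_of_eq ?_) h2
    refine Finset.sum_congr rfl fun i _ => ?_
    rw [ENNReal.toReal_pow, ENNReal.coe_toReal, coe_nnnorm]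
  set s : ℕ → U := fun n => ∑ i ∈ Finset.range n, (⟪bU i, w⟫_ℝ) • bU i with hs
  have key : ∀ n : ℕ, ‖Φ (R Q w)‖ ≤ K * ‖w - s n‖ + N * ‖w‖ := by
    intro n
    have hsplit : Φ (R Q w) = Φ (R Q (w - s n)) + Φ (R Q (s n)) := by
      rw [← map_add, ← map_add, sub_add_cancel]
    have h2 : ‖Φ (R Q (w - s n))‖ ≤ K * ‖w - s n‖ := by
      refine le_trans (hK _ (memUSigma_single Sig R hQ _)) ?_
      exact mul_le_mul_of_nonneg_left (normUSigma_single_le Sig R hQ _) hK0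
    have h3 : ‖Φ (R Q (s n))‖ ≤ N * ‖w‖ := by
      have he : Φ (R Q (s n)) = ∑ i ∈ Finset.range n, (⟪bU i, w⟫_ℝ) • Φ (R Q (bU i)) := by
        simp [hs, map_sum, map_smul]
      rw [he]
      have h4 : ‖∑ i ∈ Finset.range n, (⟪bU i, w⟫_ℝ) • Φ (R Q (bU i))‖
          ≤ ∑ i ∈ Finset.range n, |⟪bU i, w⟫_ℝ| * ‖Φ (R Q (bU i))‖ := by
        refine le_trans (norm_sum_le _ _) ?_
        refine Finset.sum_le_sum fun i _ => ?_
        rw [norm_smul, Real.norm_eq_abs]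
      refine le_trans h4 ?_
      have hcs := Finset.sum_mul_sq_le_sq_mul_sq (Finset.range n)
        (fun i => |⟪bU i, w⟫_ℝ|) (fun i => ‖Φ (R Q (bU i))‖)
      have ha : ∑ i ∈ Finset.range n, |⟪bU i, w⟫_ℝ| ^ 2 ≤ ‖w‖ ^ 2 := by
        have hb := bU.orthonormal.sum_inner_products_le (x := w) (s := Finset.range n)
        simpa using hb
      have hb := hfs n
      have hnn : 0 ≤ ∑ i ∈ Finset.range n, |⟪bU i, w⟫_ℝ| * ‖Φ (R Q (bU i))‖ :=
        Finset.sum_nonneg fun i _ => mul_nonneg (abs_nonneg _) (norm_nonneg _)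
      have hprod : (∑ i ∈ Finset.range n, |⟪bU i, w⟫_ℝ| ^ 2)
            * (∑ i ∈ Finset.range n, ‖Φ (R Q (bU i))‖ ^ 2) ≤ ‖w‖ ^ 2 * N ^ 2 :=
        mul_le_mul ha hb (Finset.sum_nonneg fun i _ => sq_nonneg _) (sq_nonneg _)
      have hsq : (∑ i ∈ Finset.range n, |⟪bU i, w⟫_ℝ| * ‖Φ (R Q (bU i))‖) ^ 2
          ≤ (N * ‖w‖) ^ 2 := by
        calc (∑ i ∈ Finset.range n, |⟪bU i, w⟫_ℝ| * ‖Φ (R Q (bU i))‖) ^ 2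
            ≤ (∑ i ∈ Finset.range n, |⟪bU i, w⟫_ℝ| ^ 2)
              * (∑ i ∈ Finset.range n, ‖Φ (R Q (bU i))‖ ^ 2) := hcs
          _ ≤ ‖w‖ ^ 2 * N ^ 2 := hprod
          _ = (N * ‖w‖) ^ 2 := by ring
      nlinarith [hnn, mul_nonneg hN0 (norm_nonneg w), hsq]
    calc ‖Φ (R Q w)‖ = ‖Φ (R Q (w - s n)) + Φ (R Q (s n))‖ := by rw [hsplit]
      _ ≤ ‖Φ (R Q (w - s n))‖ + ‖Φ (R Q (s n))‖ := norm_add_le _ _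
      _ ≤ K * ‖w - s n‖ + N * ‖w‖ := add_le_add h2 h3
  have h1 : Filter.Tendsto s Filter.atTop (𝓝 w) := by
    have h2 := (bU.hasSum_repr w).tendsto_sum_nat
    have h3 : ∀ i, (bU.repr w) i • bU i = (⟪bU i, w⟫_ℝ) • bU i := fun i => by
      rw [bU.repr_apply_apply]
    simpa [hs, h3] using h2
  have h4 : Filter.Tendsto (fun n => ‖w - s n‖) Filter.atTop (𝓝 0) := by
    have h5 : Filter.Tendsto (fun n => w - s n) Filter.atTop (𝓝 (w - w)) :=
      tendsto_const_nhds.sub h1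
    rw [sub_self] at h5
    simpa using h5.norm
  have hlim : Filter.Tendsto (fun n => K * ‖w - s n‖ + N * ‖w‖) Filter.atTop
      (𝓝 (K * 0 + N * ‖w‖)) := (h4.const_mul K).add tendsto_const_nhds
  have hfin2 := ge_of_tendsto' hlim key
  simpa using hfin2

set_option maxHeartbeats 1000000 in
lemma norm_apply_le (bU : HilbertBasis ℕ ℝ U) {Φ : U →ₗ[ℝ] H} (hΦ : MemL2Sigma bU Sig R Φ)
    {u : U} (hu : MemUSigma Sig R u) :
    ‖Φ u‖ ≤ l2SigmaNorm bU Sig R Φ * normUSigma Sig R u := by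
  obtain ⟨⟨K₀, hK₀⟩, hfin⟩ := hΦ
  set K := max K₀ 0 with hKdef
  have hK0 : 0 ≤ K := le_max_right _ _
  have hK : ∀ x : U, MemUSigma Sig R x → ‖Φ x‖ ≤ K * normUSigma Sig R x := fun x hx =>
    (hK₀ x hx).trans (mul_le_mul_of_nonneg_right (le_max_left _ _) (normUSigma_nonneg Sig R x))
  set N := l2SigmaNorm bU Sig R Φ with hNdef
  have hN0 : 0 ≤ N := Real.sqrt_nonneg _
  have hN1 : (0 : ℝ) < N + 1 := by linarith
  have main : ∀ (Q : ℕ → U →L[ℝ] U) (v : ℕ → U), (∀ i, Q i ∈ Sig) →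
      (∀ i, v i ∈ Set.range (R (Q i))) → HasSum v u →
      (Summable fun i => rangeNorm (R (Q i)) (v i)) →
      ‖Φ u‖ ≤ N * ∑' i, rangeNorm (R (Q i)) (v i) := by
    intro Q v hQ hv hsum hsummable
    refine le_of_forall_pos_le_add fun ε hε => ?_
    have hchoose : ∀ i : ℕ, ∃ x : U, R (Q i) x = v i ∧
        ‖x‖ ≤ rangeNorm (R (Q i)) (v i) + ε / (2 * (N + 1)) * (1 / 2) ^ i := by
      intro i
      have hne' : {r : ℝ | ∃ x : U, R (Q i) x = v i ∧ r = ‖x‖}.Nonempty := by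
        obtain ⟨x, hx⟩ := hv i
        exact ⟨‖x‖, x, hx, rfl⟩
      have hδ : (0 : ℝ) < ε / (2 * (N + 1)) * (1 / 2) ^ i := by positivity
      obtain ⟨r, hr, hrlt⟩ := Real.lt_sInf_add_pos hne' hδ
      obtain ⟨x, hx, rfl⟩ := hr
      exact ⟨x, hx, le_of_lt hrlt⟩
    choose w hw1 hw2 using hchoose
    have key : ∀ n : ℕ,
        ‖Φ u‖ ≤ K * (∑' i, rangeNorm (R (Q (i + n))) (v (i + n)))
          + (N * (∑ i ∈ Finset.range n, rangeNorm (R (Q i)) (v i)) + ε) := by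
      intro n
      set sn := ∑ i ∈ Finset.range n, v i with hsn
      have htail_mem_sum : HasSum (fun i => v (i + n)) (u - sn) := by
        rw [hasSum_nat_add_iff (f := v) n, ← hsn, sub_add_cancel]
        exact hsum
      have htail_summable : Summable fun i => rangeNorm (R (Q (i + n))) (v (i + n)) :=
        (summable_nat_add_iff (f := fun i => rangeNorm (R (Q i)) (v i)) n).2 hsummable
      have htail_norm : normUSigma Sig R (u - sn)
          ≤ ∑' i, rangeNorm (R (Q (i + n))) (v (i + n)) :=
        normUSigma_le_of_rep Sig R (fun i => hQ _) (fun i => hv _) htail_mem_sum htail_summable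
      have htail_mem : MemUSigma Sig R (u - sn) :=
        ⟨_, _, fun i => hQ _, fun i => hv _, htail_mem_sum, htail_summable⟩
      have h1 : ‖Φ (u - sn)‖ ≤ K * ∑' i, rangeNorm (R (Q (i + n))) (v (i + n)) :=
        (hK _ htail_mem).trans (mul_le_mul_of_nonneg_left htail_norm hK0)
      have h2 : ‖Φ sn‖ ≤ N * (∑ i ∈ Finset.range n, rangeNorm (R (Q i)) (v i)) + ε := by
        have he : Φ sn = ∑ i ∈ Finset.range n, Φ (v i) := by rw [hsn, map_sum]
        have h3 : ‖Φ sn‖ ≤ ∑ i ∈ Finset.range n, N * ‖w i‖ := by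
          rw [he]
          refine le_trans (norm_sum_le _ _) (Finset.sum_le_sum fun i _ => ?_)
          rw [← hw1 i]
          exact norm_apply_RQ_le Sig R bU hK0 hK hfin (hQ i) (w i)
        have hwsum : ∑ i ∈ Finset.range n, ‖w i‖
            ≤ (∑ i ∈ Finset.range n, rangeNorm (R (Q i)) (v i))
              + ε / (2 * (N + 1)) * ∑ i ∈ Finset.range n, ((1 : ℝ) / 2) ^ i := by
          rw [Finset.mul_sum, ← Finset.sum_add_distrib]
          exact Finset.sum_le_sum fun i _ => hw2 i
        have h6 : ∑ i ∈ Finset.range n, ((1 : ℝ) / 2) ^ i ≤ 2 := sum_geometric_two_le n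
        have hδ2 : ε / (2 * (N + 1)) * ∑ i ∈ Finset.range n, ((1 : ℝ) / 2) ^ i
            ≤ ε / (N + 1) := by
          have h7 := mul_le_mul_of_nonneg_left h6
            (le_of_lt (show (0 : ℝ) < ε / (2 * (N + 1)) by positivity))
          calc ε / (2 * (N + 1)) * ∑ i ∈ Finset.range n, ((1 : ℝ) / 2) ^ i
              ≤ ε / (2 * (N + 1)) * 2 := h7
            _ = ε / (N + 1) := by
                field_simp
        have h3' : ‖Φ sn‖
            ≤ N * ((∑ i ∈ Finset.range n, rangeNorm (R (Q i)) (v i)) + ε / (N + 1)) := by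
          calc ‖Φ sn‖ ≤ ∑ i ∈ Finset.range n, N * ‖w i‖ := h3
            _ = N * ∑ i ∈ Finset.range n, ‖w i‖ := by rw [Finset.mul_sum]
            _ ≤ N * ((∑ i ∈ Finset.range n, rangeNorm (R (Q i)) (v i)) + ε / (N + 1)) := by
                refine mul_le_mul_of_nonneg_left ?_ hN0
                exact hwsum.trans (add_le_add_right hδ2 _)
        refine h3'.trans ?_
        rw [mul_add]
        refine add_le_add_right ?_ _
        have h9 : N * (ε / (N + 1)) = ε * (N / (N + 1)) := by ring
        rw [h9]
        have h10 : N / (N + 1) ≤ 1 := (div_le_one hN1).2 (by linarith)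
        calc ε * (N / (N + 1)) ≤ ε * 1 := mul_le_mul_of_nonneg_left h10 hε.le
          _ = ε := mul_one ε
      calc ‖Φ u‖ = ‖Φ (u - sn) + Φ sn‖ := by rw [← map_add, sub_add_cancel]
        _ ≤ ‖Φ (u - sn)‖ + ‖Φ sn‖ := norm_add_le _ _
        _ ≤ _ := add_le_add h1 h2
    have hT : Filter.Tendsto (fun n => ∑' i, rangeNorm (R (Q (i + n))) (v (i + n)))
        Filter.atTop (𝓝 0) :=
      tendsto_sum_nat_add fun i => rangeNorm (R (Q i)) (v i)
    have hP : Filter.Tendsto (fun n => ∑ i ∈ Finset.range n, rangeNorm (R (Q i)) (v i))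
        Filter.atTop (𝓝 (∑' i, rangeNorm (R (Q i)) (v i))) := hsummable.hasSum.tendsto_sum_nat
    have hlim : Filter.Tendsto (fun n => K * (∑' i, rangeNorm (R (Q (i + n))) (v (i + n)))
        + (N * (∑ i ∈ Finset.range n, rangeNorm (R (Q i)) (v i)) + ε)) Filter.atTop
        (𝓝 (K * 0 + (N * (∑' i, rangeNorm (R (Q i)) (v i)) + ε))) :=
      (hT.const_mul K).add ((hP.const_mul N).add tendsto_const_nhds)
    have hdone := ge_of_tendsto' hlim key
    simpa using hdone
  obtain ⟨Q₀, v₀, hQ₀, hv₀, hsum₀, hs₀⟩ := hu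
  rcases eq_or_lt_of_le hN0 with hNeq | hNpos
  · have h0 := main Q₀ v₀ hQ₀ hv₀ hsum₀ hs₀
    rw [← hNeq] at h0 ⊢
    simpa using h0
  · have hle : ‖Φ u‖ / N ≤ normUSigma Sig R u := by
      unfold normUSigma
      refine le_csInf ⟨∑' i, rangeNorm (R (Q₀ i)) (v₀ i), Q₀, v₀, hQ₀, hv₀, hsum₀, hs₀, rfl⟩ ?_
      rintro r ⟨Q, v, hQ, hv, hsum, hs, rfl⟩
      rw [div_le_iff₀ hNpos]
      exact (main Q v hQ hv hsum hs).trans (le_of_eq (mul_comm _ _))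
    calc ‖Φ u‖ = ‖Φ u‖ / N * N := (div_mul_cancel₀ _ hNpos.ne').symm
      _ ≤ normUSigma Sig R u * N := mul_le_mul_of_nonneg_right hle hNpos.le
      _ = N * normUSigma Sig R u := mul_comm _ _

end AuxL2Sigma


/-- `L₂^Σ` is a linear space, `‖·‖_{L₂^Σ}` is a norm on it (vanishing exactly
on the operators that are zero on `U_Σ`), and `(L₂^Σ, ‖·‖_{L₂^Σ})` is complete, i.e. a
Banach space. -/
theorem l2Sigma_banach
    (bU : HilbertBasis ℕ ℝ U)
    (Sig : Set (U →L[ℝ] U)) (hne : Sig.Nonempty)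
    (hpos : ∀ Q ∈ Sig, Q.IsPositive)
    (htc : ∀ Q ∈ Sig, Summable (fun i : ℕ => ⟪Q (bU i), bU i⟫_ℝ))
    (C : ℝ) (hC : 0 < C) (hbdd : ∀ Q ∈ Sig, ‖Q‖ ≤ C ^ 2)
    (R : (U →L[ℝ] U) → U →L[ℝ] U)
    (hR : ∀ Q ∈ Sig, (R Q).IsPositive ∧ (R Q) ∘L (R Q) = Q) :
    -- `L₂^Σ` is a linear space
    (MemL2Sigma bU Sig R (0 : U →ₗ[ℝ] H)) ∧
    (∀ Φ Ψ : U →ₗ[ℝ] H, MemL2Sigma bU Sig R Φ → MemL2Sigma bU Sig R Ψ →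
       MemL2Sigma bU Sig R (Φ + Ψ)) ∧
    (∀ (c : ℝ) (Φ : U →ₗ[ℝ] H), MemL2Sigma bU Sig R Φ → MemL2Sigma bU Sig R (c • Φ)) ∧
    -- `‖·‖_{L₂^Σ}` is a norm
    (∀ Φ : U →ₗ[ℝ] H, MemL2Sigma bU Sig R Φ → 0 ≤ l2SigmaNorm bU Sig R Φ) ∧
    (∀ Φ : U →ₗ[ℝ] H, MemL2Sigma bU Sig R Φ →
       (l2SigmaNorm bU Sig R Φ = 0 ↔ ∀ u : U, MemUSigma Sig R u → Φ u = 0)) ∧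
    (∀ Φ Ψ : U →ₗ[ℝ] H, MemL2Sigma bU Sig R Φ → MemL2Sigma bU Sig R Ψ →
       l2SigmaNorm bU Sig R (Φ + Ψ) ≤ l2SigmaNorm bU Sig R Φ + l2SigmaNorm bU Sig R Ψ) ∧
    (∀ (c : ℝ) (Φ : U →ₗ[ℝ] H), MemL2Sigma bU Sig R Φ →
       l2SigmaNorm bU Sig R (c • Φ) = |c| * l2SigmaNorm bU Sig R Φ) ∧
    -- `(L₂^Σ, ‖·‖_{L₂^Σ})` is complete
    (∀ Φn : ℕ → (U →ₗ[ℝ] H), (∀ n, MemL2Sigma bU Sig R (Φn n)) →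
       (∀ ε : ℝ, 0 < ε → ∃ N : ℕ, ∀ m ≥ N, ∀ n ≥ N,
          l2SigmaNorm bU Sig R (Φn m - Φn n) < ε) →
       ∃ Φ : U →ₗ[ℝ] H, MemL2Sigma bU Sig R Φ ∧
         Tendsto (fun n => l2SigmaNorm bU Sig R (Φn n - Φ)) atTop (𝓝 0)) := by
  classical
  -- zero
  have hzero : MemL2Sigma bU Sig R (0 : U →ₗ[ℝ] H) := by
    constructor
    · exact ⟨0, fun u hu => by simp⟩
    · have h : l2SigmaNormSq bU Sig R (0 : U →ₗ[ℝ] H) = 0 := by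
        refine le_antisymm (l2SigmaNormSq_le Sig R bU _ fun Q hQ => ?_) zero_le
        simp
      rw [h]
      exact ENNReal.zero_ne_top
  -- addition
  have hadd : ∀ Φ Ψ : U →ₗ[ℝ] H, MemL2Sigma bU Sig R Φ → MemL2Sigma bU Sig R Ψ →
      MemL2Sigma bU Sig R (Φ + Ψ) := by
    intro Φ Ψ hΦ hΨ
    obtain ⟨⟨K₁, hK₁⟩, hfin₁⟩ := hΦ
    obtain ⟨⟨K₂, hK₂⟩, hfin₂⟩ := hΨ
    refine ⟨⟨K₁ + K₂, fun u hu => ?_⟩, ?_⟩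
    · calc ‖(Φ + Ψ) u‖ ≤ ‖Φ u‖ + ‖Ψ u‖ := by
            rw [LinearMap.add_apply]; exact norm_add_le _ _
        _ ≤ K₁ * normUSigma Sig R u + K₂ * normUSigma Sig R u := add_le_add (hK₁ u hu) (hK₂ u hu)
        _ = (K₁ + K₂) * normUSigma Sig R u := (add_mul _ _ _).symm
    · have h := l2SigmaNormSq_add_le Sig R bU Φ Ψ
      have h2 : (l2SigmaNormSq bU Sig R Φ ^ (1 / 2 : ℝ)
          + l2SigmaNormSq bU Sig R Ψ ^ (1 / 2 : ℝ)) ^ 2 ≠ ∞ := by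
        apply ENNReal.pow_ne_top
        exact ENNReal.add_ne_top.2 ⟨ENNReal.rpow_ne_top_of_nonneg (by norm_num) hfin₁,
          ENNReal.rpow_ne_top_of_nonneg (by norm_num) hfin₂⟩
      exact ne_top_of_le_ne_top h2 h
  -- scalar multiplication
  have hsmul : ∀ (c : ℝ) (Φ : U →ₗ[ℝ] H), MemL2Sigma bU Sig R Φ →
      MemL2Sigma bU Sig R (c • Φ) := by
    intro c Φ hΦ
    obtain ⟨⟨K, hK⟩, hfin⟩ := hΦ
    refine ⟨⟨|c| * K, fun u hu => ?_⟩, ?_⟩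
    · rw [LinearMap.smul_apply, norm_smul, Real.norm_eq_abs, mul_assoc]
      exact mul_le_mul_of_nonneg_left (hK u hu) (abs_nonneg c)
    · rw [l2SigmaNormSq_smul Sig R bU c Φ]
      exact ENNReal.mul_ne_top (ENNReal.pow_ne_top ENNReal.coe_ne_top) hfin
  -- nonnegativity
  have hnonneg : ∀ Φ : U →ₗ[ℝ] H, MemL2Sigma bU Sig R Φ → 0 ≤ l2SigmaNorm bU Sig R Φ :=
    fun Φ _ => Real.sqrt_nonneg _
  -- norm vanishes iff zero on U_Σ
  have hzero_iff : ∀ Φ : U →ₗ[ℝ] H, MemL2Sigma bU Sig R Φ →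
      (l2SigmaNorm bU Sig R Φ = 0 ↔ ∀ u : U, MemUSigma Sig R u → Φ u = 0) := by
    intro Φ hΦ
    constructor
    · intro h0 u hu
      have h := norm_apply_le Sig R bU hΦ hu
      rw [h0, zero_mul] at h
      exact norm_le_zero_iff.1 h
    · intro hz
      have h : l2SigmaNormSq bU Sig R Φ = 0 := by
        refine le_antisymm (l2SigmaNormSq_le Sig R bU Φ fun Q hQ => ?_) zero_le
        have hz' : ∀ i : ℕ, Φ (R Q (bU i)) = 0 := fun i =>
          hz _ (memUSigma_single Sig R hQ (bU i))
        simp [hz']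
      simp [l2SigmaNorm, h]
  -- triangle inequality
  have htri : ∀ Φ Ψ : U →ₗ[ℝ] H, MemL2Sigma bU Sig R Φ → MemL2Sigma bU Sig R Ψ →
      l2SigmaNorm bU Sig R (Φ + Ψ) ≤ l2SigmaNorm bU Sig R Φ + l2SigmaNorm bU Sig R Ψ := by
    intro Φ Ψ hΦ hΨ
    have hfinA : l2SigmaNormSq bU Sig R Φ ≠ ∞ := hΦ.2
    have hfinB : l2SigmaNormSq bU Sig R Ψ ≠ ∞ := hΨ.2
    have h := l2SigmaNormSq_add_le Sig R bU Φ Ψ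
    have hA2 : l2SigmaNormSq bU Sig R Φ ^ (1 / 2 : ℝ) ≠ ∞ :=
      ENNReal.rpow_ne_top_of_nonneg (by norm_num) hfinA
    have hB2 : l2SigmaNormSq bU Sig R Ψ ^ (1 / 2 : ℝ) ≠ ∞ :=
      ENNReal.rpow_ne_top_of_nonneg (by norm_num) hfinB
    have hsum_ne : (l2SigmaNormSq bU Sig R Φ ^ (1 / 2 : ℝ)
        + l2SigmaNormSq bU Sig R Ψ ^ (1 / 2 : ℝ)) ^ 2 ≠ ∞ :=
      ENNReal.pow_ne_top (ENNReal.add_ne_top.2 ⟨hA2, hB2⟩)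
    have h1 : (l2SigmaNormSq bU Sig R (Φ + Ψ)).toReal
        ≤ ((l2SigmaNormSq bU Sig R Φ ^ (1 / 2 : ℝ)
          + l2SigmaNormSq bU Sig R Ψ ^ (1 / 2 : ℝ)) ^ 2).toReal :=
      ENNReal.toReal_mono hsum_ne h
    have h2 : ((l2SigmaNormSq bU Sig R Φ ^ (1 / 2 : ℝ)
        + l2SigmaNormSq bU Sig R Ψ ^ (1 / 2 : ℝ)) ^ 2).toReal
        = (Real.sqrt (l2SigmaNormSq bU Sig R Φ).toReal
          + Real.sqrt (l2SigmaNormSq bU Sig R Ψ).toReal) ^ 2 := by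
      rw [ENNReal.toReal_pow, ENNReal.toReal_add hA2 hB2, ← ENNReal.toReal_rpow,
        ← ENNReal.toReal_rpow, ← Real.sqrt_eq_rpow, ← Real.sqrt_eq_rpow]
    calc l2SigmaNorm bU Sig R (Φ + Ψ)
        = Real.sqrt (l2SigmaNormSq bU Sig R (Φ + Ψ)).toReal := rfl
      _ ≤ Real.sqrt ((Real.sqrt (l2SigmaNormSq bU Sig R Φ).toReal
          + Real.sqrt (l2SigmaNormSq bU Sig R Ψ).toReal) ^ 2) := by
          apply Real.sqrt_le_sqrt
          rw [← h2]
          exact h1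
      _ = Real.sqrt (l2SigmaNormSq bU Sig R Φ).toReal
          + Real.sqrt (l2SigmaNormSq bU Sig R Ψ).toReal := Real.sqrt_sq (by positivity)
      _ = l2SigmaNorm bU Sig R Φ + l2SigmaNorm bU Sig R Ψ := rfl
  -- homogeneity
  have hhomog : ∀ (c : ℝ) (Φ : U →ₗ[ℝ] H), MemL2Sigma bU Sig R Φ →
      l2SigmaNorm bU Sig R (c • Φ) = |c| * l2SigmaNorm bU Sig R Φ := by
    intro c Φ _
    unfold l2SigmaNorm
    rw [l2SigmaNormSq_smul Sig R bU c Φ, ENNReal.toReal_mul]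
    have h1 : (((‖c‖₊ : ℝ≥0∞)) ^ 2).toReal = |c| ^ 2 := by
      rw [ENNReal.toReal_pow, ENNReal.coe_toReal, coe_nnnorm, Real.norm_eq_abs]
    rw [h1, Real.sqrt_mul (by positivity), Real.sqrt_sq (abs_nonneg c)]
  -- completeness
  have hcomplete : ∀ Φn : ℕ → (U →ₗ[ℝ] H), (∀ n, MemL2Sigma bU Sig R (Φn n)) →
      (∀ ε : ℝ, 0 < ε → ∃ N : ℕ, ∀ m ≥ N, ∀ n ≥ N,
        l2SigmaNorm bU Sig R (Φn m - Φn n) < ε) →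
      ∃ Φ : U →ₗ[ℝ] H, MemL2Sigma bU Sig R Φ ∧
        Tendsto (fun n => l2SigmaNorm bU Sig R (Φn n - Φ)) atTop (𝓝 0) := by
    intro Φn hmem hcauchy
    have hmemdiff : ∀ m n, MemL2Sigma bU Sig R (Φn m - Φn n) := by
      intro m n
      have h := hadd (Φn m) ((-1 : ℝ) • Φn n) (hmem m) (hsmul (-1) (Φn n) (hmem n))
      rwa [neg_one_smul, ← sub_eq_add_neg] at h
    -- uniform bound on the norms
    obtain ⟨N₁, hN₁⟩ := hcauchy 1 one_pos
    set M : ℝ := max ((Finset.range (N₁ + 1)).sup' (by simp)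
        fun k => l2SigmaNorm bU Sig R (Φn k)) (1 + l2SigmaNorm bU Sig R (Φn N₁)) with hM
    have hMbound : ∀ n, l2SigmaNorm bU Sig R (Φn n) ≤ M := by
      intro n
      rcases le_or_gt n N₁ with hn | hn
      · refine le_trans ?_ (le_max_left _ _)
        exact Finset.le_sup' (fun k => l2SigmaNorm bU Sig R (Φn k)) (Finset.mem_range.2 (Nat.lt_succ_of_le hn))
      · refine le_trans ?_ (le_max_right _ _)
        have h2 := htri (Φn n - Φn N₁) (Φn N₁) (hmemdiff n N₁) (hmem N₁)
        rw [sub_add_cancel] at h2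
        have h3 : l2SigmaNorm bU Sig R (Φn n - Φn N₁) < 1 := hN₁ n hn.le N₁ le_rfl
        linarith
    have hM0 : 0 ≤ M := le_trans (Real.sqrt_nonneg _) (hMbound 0)
    -- pointwise convergence on U_Σ
    have hptwise : ∀ u : U, MemUSigma Sig R u →
        ∃ l : H, Tendsto (fun n => Φn n u) atTop (𝓝 l) := by
      intro u hu
      apply cauchySeq_tendsto_of_complete
      rw [Metric.cauchySeq_iff]
      intro ε hε
      have hc0 : 0 ≤ normUSigma Sig R u := normUSigma_nonneg Sig R u
      obtain ⟨N, hN⟩ := hcauchy (ε / (normUSigma Sig R u + 1)) (by positivity)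
      refine ⟨N, fun m hm n hn => ?_⟩
      have h1 : ‖(Φn m - Φn n) u‖
          ≤ l2SigmaNorm bU Sig R (Φn m - Φn n) * normUSigma Sig R u :=
        norm_apply_le Sig R bU (hmemdiff m n) hu
      rw [dist_eq_norm]
      have h4 : Φn m u - Φn n u = (Φn m - Φn n) u := (LinearMap.sub_apply _ _ _).symm
      rw [h4]
      calc ‖(Φn m - Φn n) u‖
          ≤ l2SigmaNorm bU Sig R (Φn m - Φn n) * normUSigma Sig R u := h1
        _ ≤ ε / (normUSigma Sig R u + 1) * normUSigma Sig R u :=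
            mul_le_mul_of_nonneg_right (hN m hm n hn).le hc0
        _ < ε / (normUSigma Sig R u + 1) * (normUSigma Sig R u + 1) := by
            have hp : (0 : ℝ) < ε / (normUSigma Sig R u + 1) := by positivity
            exact mul_lt_mul_of_pos_left (lt_add_one _) hp
        _ = ε := div_mul_cancel₀ ε (by positivity)
    -- U_Σ as a submodule
    set S : Submodule ℝ U :=
      { carrier := {u : U | MemUSigma Sig R u}
        add_mem' := fun ha hb => memUSigma_add Sig R ha hb
        zero_mem' := memUSigma_zero Sig R hne
        smul_mem' := fun c u hu => memUSigma_smul Sig R c hu } with hS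
    have hpt : ∀ u : S, ∃ l : H, Tendsto (fun n => Φn n (u : U)) atTop (𝓝 l) :=
      fun u => hptwise u u.2
    choose g hg using hpt
    have hgadd : ∀ u v : S, g (u + v) = g u + g v := by
      intro u v
      have h1 := hg (u + v)
      simp only [Submodule.coe_add, map_add] at h1
      exact tendsto_nhds_unique h1 ((hg u).add (hg v))
    have hgsmul : ∀ (c : ℝ) (u : S), g (c • u) = c • g u := by
      intro c u
      have h1 := hg (c • u)
      simp only [Submodule.coe_smul, map_smul] at h1
      exact tendsto_nhds_unique h1 ((hg u).const_smul c)
    set glin : S →ₗ[ℝ] H :=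
      { toFun := g
        map_add' := hgadd
        map_smul' := fun c u => by simpa using hgsmul c u } with hglin
    obtain ⟨T, hT⟩ := Submodule.exists_isCompl S
    set Φ : U →ₗ[ℝ] H := LinearMap.ofIsCompl hT glin 0 with hΦdef
    have hΦS : ∀ (u : U), MemUSigma Sig R u →
        Tendsto (fun n => Φn n u) atTop (𝓝 (Φ u)) := by
      intro u hu
      have hmemS : u ∈ S := hu
      have h1 : Φ u = glin ⟨u, hmemS⟩ := by
        have h2 := LinearMap.ofIsCompl_left_apply hT (φ := glin) (ψ := (0 : T →ₗ[ℝ] H))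
          ⟨u, hmemS⟩
        simpa [hΦdef] using h2
      rw [h1]
      exact hg ⟨u, hmemS⟩
    -- quantitative convergence bound
    have hdiff_bound : ∀ ε : ℝ, 0 < ε → ∃ N, ∀ n ≥ N,
        l2SigmaNormSq bU Sig R (Φn n - Φ) ≤ ENNReal.ofReal (ε ^ 2) := by
      intro ε hε
      obtain ⟨N, hN⟩ := hcauchy ε hε
      refine ⟨N, fun n hn => ?_⟩
      refine l2SigmaNormSq_le Sig R bU _ fun Q hQ => ?_
      have hlimQ : ∀ i : ℕ,
          Tendsto (fun m => ((‖(Φn n - Φn m) (R Q (bU i))‖₊ : ℝ≥0∞)) ^ 2) atTop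
            (𝓝 (((‖(Φn n - Φ) (R Q (bU i))‖₊ : ℝ≥0∞)) ^ 2)) := by
        intro i
        have h1 : Tendsto (fun m => Φn m (R Q (bU i))) atTop (𝓝 (Φ (R Q (bU i)))) :=
          hΦS _ (memUSigma_single Sig R hQ _)
        have h2 : Tendsto (fun m => (Φn n - Φn m) (R Q (bU i))) atTop
            (𝓝 ((Φn n - Φ) (R Q (bU i)))) := by
          simp only [LinearMap.sub_apply]
          exact tendsto_const_nhds.sub h1
        have h3 := (h2.nnnorm).pow 2
        have h4 := (ENNReal.tendsto_coe (f := atTop)).2 h3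
        simpa [ENNReal.coe_pow] using h4
      refine le_trans (tsum_le_liminf_tsum hlimQ) ?_
      have hbnd : ∀ᶠ m in atTop,
          (∑' i, ((‖(Φn n - Φn m) (R Q (bU i))‖₊ : ℝ≥0∞)) ^ 2) ≤ ENNReal.ofReal (ε ^ 2) := by
        filter_upwards [eventually_ge_atTop N] with m hm
        have h1 : l2SigmaNorm bU Sig R (Φn n - Φn m) ≤ ε := (hN n hn m hm).le
        have h2 := normSq_le_of_norm_le Sig R bU (hmemdiff n m).2 h1
        exact le_trans (tsum_le_l2SigmaNormSq Sig R bU _ hQ) h2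
      exact (liminf_le_liminf hbnd).trans_eq (liminf_const (ENNReal.ofReal (ε ^ 2)))
    -- the limit operator is in L₂^Σ
    have hΦSq : l2SigmaNormSq bU Sig R Φ ≤ ENNReal.ofReal (M ^ 2) := by
      refine l2SigmaNormSq_le Sig R bU _ fun Q hQ => ?_
      have hlimQ : ∀ i : ℕ, Tendsto (fun m => ((‖Φn m (R Q (bU i))‖₊ : ℝ≥0∞)) ^ 2) atTop
          (𝓝 (((‖Φ (R Q (bU i))‖₊ : ℝ≥0∞)) ^ 2)) := by
        intro i
        have h1 : Tendsto (fun m => Φn m (R Q (bU i))) atTop (𝓝 (Φ (R Q (bU i)))) :=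
          hΦS _ (memUSigma_single Sig R hQ _)
        have h3 := (h1.nnnorm).pow 2
        have h4 := (ENNReal.tendsto_coe (f := atTop)).2 h3
        simpa [ENNReal.coe_pow] using h4
      refine le_trans (tsum_le_liminf_tsum hlimQ) ?_
      have hbnd : ∀ᶠ m in atTop,
          (∑' i, ((‖Φn m (R Q (bU i))‖₊ : ℝ≥0∞)) ^ 2) ≤ ENNReal.ofReal (M ^ 2) := by
        filter_upwards with m
        exact le_trans (tsum_le_l2SigmaNormSq Sig R bU _ hQ)
          (normSq_le_of_norm_le Sig R bU (hmem m).2 (hMbound m))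
      exact (liminf_le_liminf hbnd).trans_eq (liminf_const (ENNReal.ofReal (M ^ 2)))
    refine ⟨Φ, ⟨⟨M, ?_⟩, ?_⟩, ?_⟩
    · intro u hu
      have h1 : ∀ n, ‖Φn n u‖ ≤ M * normUSigma Sig R u := fun n =>
        (norm_apply_le Sig R bU (hmem n) hu).trans
          (mul_le_mul_of_nonneg_right (hMbound n) (normUSigma_nonneg Sig R u))
      exact le_of_tendsto (hΦS u hu).norm (Filter.Eventually.of_forall h1)
    · exact ne_top_of_le_ne_top ENNReal.ofReal_ne_top hΦSq
    · rw [Metric.tendsto_atTop]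
      intro ε hε
      obtain ⟨N, hN⟩ := hdiff_bound (ε / 2) (half_pos hε)
      refine ⟨N, fun n hn => ?_⟩
      have h1 : l2SigmaNorm bU Sig R (Φn n - Φ) ≤ ε / 2 :=
        norm_le_of_normSq_le Sig R bU (half_pos hε).le (hN n hn)
      have h2 : 0 ≤ l2SigmaNorm bU Sig R (Φn n - Φ) := Real.sqrt_nonneg _
      rw [Real.dist_eq, sub_zero, abs_of_nonneg h2]
      linarith
  exact ⟨hzero, hadd, hsmul, hnonneg, hzero_iff, htri, hhomog, hcomplete⟩

end
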